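/- Let g ≥ 3 be an integer and θ ∈ (0, π/g). Set λ₁ = cot(θ) and λ_g = cot(θ + (g-1)π/g). Then 1 + λ₁·λ_g = -cot(π/g)·(1 + λ₁²)/(λ₁ - cot(π/g)) and this quantity is strictly negative. -/

import Mathlib

open Real

theorem stmt0 (g : ℕ) (hg : 3 ≤ g) (θ : ℝ) (hθ : θ ∈ Set.Ioo 0 (π / g)) :
    1 + Real.cot θ * Real.cot (θ + ((g : ℝ) - 1) * π / g)
        = -(Real.cot (π / g) * (1 + Real.cot θ ^ 2)) / (Real.cot θ - Real.cot (π / g)) ∧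
      1 + Real.cot θ * Real.cot (θ + ((g : ℝ) - 1) * π / g) < 0 := by
  obtain ⟨hθ0, hθ1⟩ := hθ
  have hgR : (3:ℝ) ≤ (g:ℝ) := by exact_mod_cast hg
  have hg0 : (0:ℝ) < (g:ℝ) := by linarith
  set b := π / g with hbdef
  have hbpos : 0 < b := div_pos pi_pos hg0
  have hble : b ≤ π / 3 := by
    apply div_le_div_of_nonneg_left pi_pos.le (by norm_num) hgR
  have hblt : b < π / 2 := lt_of_le_of_lt hble (by linarith [pi_pos])
  have hθltb : θ < b := hθ1
  have hsθ : 0 < Real.sin θ := Real.sin_pos_of_pos_of_lt_pi hθ0 (by linarith [pi_pos])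
  have hsb : 0 < Real.sin b := Real.sin_pos_of_pos_of_lt_pi hbpos (by linarith [pi_pos])
  have hcb : 0 < Real.cos b := Real.cos_pos_of_mem_Ioo ⟨by linarith, hblt⟩
  have hD : Real.sin (θ - b) < 0 := by
    apply Real.sin_neg_of_neg_of_neg_pi_lt (by linarith)
    linarith [pi_pos]
  have hangle : θ + ((g : ℝ) - 1) * π / g = (θ - b) + π := by
    rw [hbdef]; field_simp; ring
  have h1 : Real.cot (θ + ((g : ℝ) - 1) * π / g)
      = Real.cos (θ - b) / Real.sin (θ - b) := by
    rw [hangle, Real.cot_eq_cos_div_sin, Real.cos_add_pi, Real.sin_add_pi, neg_div_neg_eq]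
  have hD' : Real.sin θ * Real.cos b - Real.cos θ * Real.sin b ≠ 0 := by
    rw [← Real.sin_sub]; exact hD.ne
  have hden : Real.cot θ - Real.cot b > 0 := by
    rw [Real.cot_eq_cos_div_sin, Real.cot_eq_cos_div_sin]
    have h2 : Real.cos θ / Real.sin θ - Real.cos b / Real.sin b
        = -Real.sin (θ - b) / (Real.sin θ * Real.sin b) := by
      rw [Real.sin_sub]; field_simp; ring
    rw [h2]
    apply div_pos (by linarith) (mul_pos hsθ hsb)
  have hcotb : 0 < Real.cot b := by
    rw [Real.cot_eq_cos_div_sin]; exact div_pos hcb hsb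
  have hmain : 1 + Real.cot θ * Real.cot (θ + ((g : ℝ) - 1) * π / g)
      = -(Real.cot b * (1 + Real.cot θ ^ 2)) / (Real.cot θ - Real.cot b) := by
    rw [h1, eq_div_iff hden.ne']
    rw [Real.cot_eq_cos_div_sin, Real.cot_eq_cos_div_sin, Real.cos_sub, Real.sin_sub]
    field_simp
    ring
  refine ⟨hmain, ?_⟩
  rw [hmain]
  apply div_neg_of_neg_of_pos _ hden
  have : 0 < Real.cot b * (1 + Real.cot θ ^ 2) := by positivity
  linarith
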